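/- Define H : ℝ³ → ℝ by H(ξ) = ‖ξ‖·√(2 + ‖ξ‖²). There exists a constant C > 0 such that for every integer k with 1 ≤ k ≤ 4 and all nonzero ξ₁, ξ₂ ∈ ℝ³, the k-th iterated Fréchet derivatives of H satisfy ‖D^k H(ξ₂) - D^k H(-ξ₁)‖ ≤ C·( √(2+‖ξ₁‖²)/‖ξ₁‖^k + √(2+‖ξ₂‖²)/‖ξ₂‖^k )·‖ξ₁ + ξ₂‖. -/

import Mathlib

open Set Metric Finset

noncomputable section

variable {F : Type*} [NormedAddCommGroup F] [InnerProductSpace ℝ F]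

/-- Scaling identity for iterated derivatives of the norm. -/
theorem aux_norm_scaling (k : ℕ) (r : ℝ) (hr : 0 < r) (x : F) (hx : x ≠ 0) :
    r ^ k * ‖iteratedFDeriv ℝ k (‖·‖ : F → ℝ) (r • x)‖
      = r * ‖iteratedFDeriv ℝ k (‖·‖ : F → ℝ) x‖ := by
  have hs : IsOpen ({0}ᶜ : Set F) := isOpen_compl_singleton
  have hsu : UniqueDiffOn ℝ ({0}ᶜ : Set F) := hs.uniqueDiffOn
  have hN : ContDiffOn ℝ ⊤ (‖·‖ : F → ℝ) ({0}ᶜ : Set F) :=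
    fun y hy => (contDiffAt_norm ℝ hy).contDiffWithinAt
  set g : F →L[ℝ] F := r • ContinuousLinearMap.id ℝ F with hg
  have hpre : g ⁻¹' ({0}ᶜ : Set F) = ({0}ᶜ : Set F) := by
    ext y
    simp [hg, smul_eq_zero, hr.ne']
  have hgx : g x ∈ ({0}ᶜ : Set F) := by
    simp [hg, smul_eq_zero, hr.ne', hx]
  have hcomp := g.iteratedFDerivWithin_comp_right hN hsu (by rw [hpre]; exact hsu) hgx
    (i := k) le_top
  rw [hpre] at hcomp
  have hfun : ((‖·‖ : F → ℝ) ∘ g) = (r • (‖·‖ : F → ℝ)) := by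
    funext y
    simp [hg, norm_smul, abs_of_pos hr, mul_comm]
  rw [hfun] at hcomp
  have hsmul : iteratedFDerivWithin ℝ k (r • (‖·‖ : F → ℝ)) ({0}ᶜ : Set F) x
      = r • iteratedFDerivWithin ℝ k (‖·‖ : F → ℝ) ({0}ᶜ : Set F) x :=
    iteratedFDerivWithin_const_smul_apply ((hN x hx).of_le le_top) hsu hx
  rw [hsmul] at hcomp
  have hgx' : g x = r • x := by simp [hg]
  rw [hgx'] at hcomp hgx
  -- identify compCLM with r^k smul
  have hcc : (iteratedFDerivWithin ℝ k (‖·‖ : F → ℝ) ({0}ᶜ : Set F)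
        (r • x)).compContinuousLinearMap (fun _ => g)
      = r ^ k • iteratedFDerivWithin ℝ k (‖·‖ : F → ℝ) ({0}ᶜ : Set F) (r • x) := by
    ext m
    simp only [ContinuousMultilinearMap.compContinuousLinearMap_apply,
      ContinuousMultilinearMap.smul_apply, hg, ContinuousLinearMap.smul_apply,
      ContinuousLinearMap.id_apply]
    rw [ContinuousMultilinearMap.map_smul_univ]
    simp
  rw [hcc] at hcomp
  have e1 : iteratedFDerivWithin ℝ k (‖·‖ : F → ℝ) ({0}ᶜ : Set F) x
      = iteratedFDeriv ℝ k (‖·‖ : F → ℝ) x := iteratedFDerivWithin_of_isOpen k hs hx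
  have e2 : iteratedFDerivWithin ℝ k (‖·‖ : F → ℝ) ({0}ᶜ : Set F) (r • x)
      = iteratedFDeriv ℝ k (‖·‖ : F → ℝ) (r • x) :=
    iteratedFDerivWithin_of_isOpen k hs hgx
  rw [e1, e2] at hcomp
  have h2 := congrArg (‖·‖ : _ → ℝ) hcomp
  simp only [] at h2
  rw [norm_smul r (iteratedFDeriv ℝ k (‖·‖ : F → ℝ) x),
    norm_smul (r ^ k) (iteratedFDeriv ℝ k (‖·‖ : F → ℝ) (r • x))] at h2
  simp only [Real.norm_eq_abs, abs_of_pos hr, abs_of_pos (pow_pos hr k)] at h2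
  exact h2.symm


/-- Bound for iterated derivatives of the norm in a nontrivial finite dimensional space. -/
theorem aux_norm_bound [FiniteDimensional ℝ F] [Nontrivial F] (k : ℕ) :
    ∃ c : ℝ, 0 < c ∧ ∀ x : F, x ≠ 0 →
      ‖x‖ ^ k * ‖iteratedFDeriv ℝ k (‖·‖ : F → ℝ) x‖ ≤ c * ‖x‖ := by
  have hcont : ContinuousOn (fun x : F => ‖iteratedFDeriv ℝ k (‖·‖ : F → ℝ) x‖)
      (sphere (0 : F) 1) := by
    intro u hu
    have hu0 : u ≠ 0 := by
      intro h
      rw [mem_sphere_iff_norm, sub_zero] at hu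
      simp [h] at hu
    have h1 : ContDiffAt ℝ 0 (iteratedFDeriv ℝ k (‖·‖ : F → ℝ)) u :=
      (contDiffAt_norm ℝ (n := (⊤ : ℕ∞)) hu0).iteratedFDeriv_right (by exact_mod_cast le_top)
    exact (continuous_norm.continuousAt.comp (h1.continuousAt)).continuousWithinAt
  obtain ⟨u0, hu0⟩ := exists_norm_eq F (by norm_num : (0:ℝ) ≤ 1)
  have hsph : u0 ∈ sphere (0 : F) 1 := by simp [mem_sphere_iff_norm, hu0]
  obtain ⟨z, hz, hmax'⟩ := (isCompact_sphere (0 : F) 1).exists_isMaxOn ⟨u0, hsph⟩ hcont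
  have hmax := isMaxOn_iff.mp hmax' 
  set c : ℝ := ‖iteratedFDeriv ℝ k (‖·‖ : F → ℝ) z‖ + 1 with hc
  refine ⟨c, by positivity, fun x hx => ?_⟩
  have hxn : (0 : ℝ) < ‖x‖ := norm_pos_iff.mpr hx
  set u : F := ‖x‖⁻¹ • x with hu
  have hun : ‖u‖ = 1 := by
    rw [hu, norm_smul]
    simp [abs_of_pos (inv_pos.mpr hxn), inv_mul_cancel₀ hxn.ne']
  have husph : u ∈ sphere (0 : F) 1 := by simp [mem_sphere_iff_norm, hun]
  have hune : u ≠ 0 := by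
    intro h; rw [h] at hun; simp at hun
  have hscale := aux_norm_scaling k ‖x‖ hxn u hune
  have hxu : ‖x‖ • u = x := by
    rw [hu, smul_smul, mul_inv_cancel₀ hxn.ne', one_smul]
  rw [hxu] at hscale
  rw [hscale]
  have hle : ‖iteratedFDeriv ℝ k (‖·‖ : F → ℝ) u‖ ≤ c := by
    have := hmax u husph
    simp only [hc]
    linarith
  calc ‖x‖ * ‖iteratedFDeriv ℝ k (‖·‖ : F → ℝ) u‖ ≤ ‖x‖ * c := by
        exact mul_le_mul_of_nonneg_left hle hxn.le
    _ = c * ‖x‖ := mul_comm _ _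

/-- Iterated derivative of a composition with a translation. -/
theorem aux_itd_comp_add {E G : Type*} [NormedAddCommGroup E] [NormedSpace ℝ E]
    [NormedAddCommGroup G] [NormedSpace ℝ G] (f : E → G) {s : Set E} (hs : IsOpen s)
    (hf : ContDiffOn ℝ ⊤ f s) (v : E) (k : ℕ) :
    ∀ x : E, v + x ∈ s →
      iteratedFDeriv ℝ k (fun y => f (v + y)) x = iteratedFDeriv ℝ k f (v + x) := by
  induction k with
  | zero =>
    intro x hx
    ext m
    simp [iteratedFDeriv_zero_apply]
  | succ k IH =>
    intro x hx
    have hso : IsOpen ((fun y : E => v + y) ⁻¹' s) :=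
      hs.preimage (continuous_const.add continuous_id)
    have hxs : x ∈ ((fun y : E => v + y) ⁻¹' s) := hx
    have heq : (iteratedFDeriv ℝ k (fun y => f (v + y)))
        =ᶠ[nhds x] (fun y => iteratedFDeriv ℝ k f (v + y)) :=
      Filter.eventually_of_mem (hso.mem_nhds hxs) (fun y hy => IH y hy)
    ext m
    rw [iteratedFDeriv_succ_apply_left, iteratedFDeriv_succ_apply_left]
    have hdiff : DifferentiableAt ℝ (iteratedFDeriv ℝ k f) (v + x) := by
      have h1 : ContDiffAt ℝ ⊤ f (v + x) := hf.contDiffAt (hs.mem_nhds hx)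
      have h2 : ContDiffAt ℝ 1 (iteratedFDeriv ℝ k f) (v + x) :=
        h1.iteratedFDeriv_right (by exact_mod_cast le_top)
      exact h2.differentiableAt (by norm_num)
    have h1 : fderiv ℝ (iteratedFDeriv ℝ k (fun y => f (v + y))) x
        = fderiv ℝ (fun y => iteratedFDeriv ℝ k f (v + y)) x := heq.fderiv_eq
    have h2 : fderiv ℝ (fun y => iteratedFDeriv ℝ k f (v + y)) x
        = fderiv ℝ (iteratedFDeriv ℝ k f) (v + x) := by
      rw [show (fun y => iteratedFDeriv ℝ k f (v + y))
          = (iteratedFDeriv ℝ k f) ∘ (fun y => v + y) from rfl]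
      rw [fderiv_comp x hdiff (differentiableAt_id.const_add v)]
      rw [fderiv_const_add, fderiv_id', ContinuousLinearMap.comp_id]
    rw [h1, h2]

end

noncomputable section

open Set Metric Finset

local notation "E3" => EuclideanSpace ℝ (Fin 3)
local notation "E4" => EuclideanSpace ℝ (Fin 4)

/-- The isometric embedding of `ℝ³` into `ℝ⁴` as the last three coordinates. -/
def auxL : E3 →ₗᵢ[ℝ] E4 where
  toFun x := WithLp.toLp 2 (Fin.cons (0 : ℝ) (fun j : Fin 3 => x j) : ∀ _ : Fin 4, ℝ)
  map_add' x y := by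
    ext i
    induction i using Fin.cases <;>
      simp [Fin.cons_zero, Fin.cons_succ, PiLp.add_apply]
  map_smul' c x := by
    ext i
    induction i using Fin.cases <;>
      simp [Fin.cons_zero, Fin.cons_succ, PiLp.smul_apply, smul_eq_mul]
  norm_map' x := by
    rw [EuclideanSpace.norm_eq, EuclideanSpace.norm_eq]
    congr 1
    rw [Fin.sum_univ_succ]
    simp [Fin.cons_zero, Fin.cons_succ]

def auxv : E4 := EuclideanSpace.single 0 (Real.sqrt 2)

theorem auxv_add (x : E3) :
    auxv + auxL x = WithLp.toLp 2 (Fin.cons (Real.sqrt 2) (fun j : Fin 3 => x j) : ∀ _ : Fin 4, ℝ) := by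
  ext i
  induction i using Fin.cases <;>
    simp [auxv, auxL, PiLp.add_apply, EuclideanSpace.single_apply, Fin.cons_zero, Fin.cons_succ,
      Fin.succ_ne_zero]

theorem auxv_norm (x : E3) : ‖auxv + auxL x‖ = Real.sqrt (2 + ‖x‖ ^ 2) := by
  rw [auxv_add, EuclideanSpace.norm_eq]
  congr 1
  rw [Fin.sum_univ_succ]
  have h2 : ‖Real.sqrt 2‖ ^ 2 = 2 := by
    rw [Real.norm_eq_abs, sq_abs, Real.sq_sqrt (by norm_num : (0:ℝ) ≤ 2)]
  have h3 : ‖x‖ ^ 2 = ∑ j : Fin 3, ‖x j‖ ^ 2 := by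
    rw [EuclideanSpace.norm_eq, Real.sq_sqrt]
    positivity
  rw [h3]
  simp [h2, Fin.cons_zero, Fin.cons_succ]

theorem aux_M_bound (k : ℕ) :
    ∃ c : ℝ, 0 < c ∧ ∀ x : E3,
      (Real.sqrt (2 + ‖x‖ ^ 2)) ^ k *
        ‖iteratedFDeriv ℝ k (fun y : E3 => Real.sqrt (2 + ‖y‖ ^ 2)) x‖
        ≤ c * Real.sqrt (2 + ‖x‖ ^ 2) := by
  obtain ⟨c, hc, hbd⟩ := aux_norm_bound (F := E4) k
  refine ⟨c, hc, fun x => ?_⟩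
  set L' : E3 →L[ℝ] E4 := auxL.toContinuousLinearMap with hL'
  set g : E4 → ℝ := fun y => ‖auxv + y‖ with hgdef
  have hL'app : ∀ y : E3, L' y = auxL y := fun y => rfl
  have hzx : ∀ y : E3, auxv + auxL y ≠ 0 := by
    intro y h
    have := auxv_norm y
    rw [h, norm_zero] at this
    have h2 : (0:ℝ) < Real.sqrt (2 + ‖y‖ ^ 2) := Real.sqrt_pos.mpr (by positivity)
    linarith [this, h2]
  have hfun : (fun y : E3 => Real.sqrt (2 + ‖y‖ ^ 2)) = g ∘ L' := by
    funext y
    simp only [Function.comp_apply, hgdef, hL'app]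
    exact (auxv_norm y).symm
  set u : Set E4 := (fun y : E4 => auxv + y) ⁻¹' ({0}ᶜ : Set E4) with hu
  have huo : IsOpen u := isOpen_compl_singleton.preimage (continuous_const.add continuous_id)
  have hg : ContDiffOn ℝ ⊤ g u := by
    intro y hy
    have hy' : auxv + y ≠ 0 := hy
    exact (ContDiffAt.comp y (contDiffAt_norm ℝ hy')
      (contDiffAt_const.add contDiffAt_id)).contDiffWithinAt
  have hLu : L' ⁻¹' u = Set.univ := Set.eq_univ_of_forall (fun y => hzx y)
  have hLx : L' x ∈ u := hzx x
  have hcomp := L'.iteratedFDerivWithin_comp_right (f := g) hg huo.uniqueDiffOn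
    (by rw [hLu]; exact uniqueDiffOn_univ) hLx (i := k) le_top
  rw [hLu, iteratedFDerivWithin_univ] at hcomp
  have hwithin : iteratedFDerivWithin ℝ k g u (L' x) = iteratedFDeriv ℝ k g (L' x) :=
    iteratedFDerivWithin_of_isOpen k huo hLx
  rw [hwithin] at hcomp
  have htrans : iteratedFDeriv ℝ k g (L' x)
      = iteratedFDeriv ℝ k (‖·‖ : E4 → ℝ) (auxv + auxL x) := by
    rw [hL'app]
    exact aux_itd_comp_add (‖·‖ : E4 → ℝ) isOpen_compl_singleton
      (fun y hy => (contDiffAt_norm ℝ hy).contDiffWithinAt) auxv k (auxL x) (hzx x)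
  have hnormle : ‖iteratedFDeriv ℝ k (g ∘ L') x‖
      ≤ ‖iteratedFDeriv ℝ k (‖·‖ : E4 → ℝ) (auxv + auxL x)‖ := by
    rw [hcomp, htrans]
    refine le_trans (ContinuousMultilinearMap.norm_compContinuousLinearMap_le _ _) ?_
    have hprod : (∏ _i : Fin k, ‖L'‖) ≤ 1 := by
      refine Finset.prod_le_one (fun _ _ => norm_nonneg _) ?_
      intro _ _
      exact auxL.norm_toContinuousLinearMap_le
    calc ‖iteratedFDeriv ℝ k (‖·‖ : E4 → ℝ) (auxv + auxL x)‖ * ∏ _i : Fin k, ‖L'‖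
        ≤ ‖iteratedFDeriv ℝ k (‖·‖ : E4 → ℝ) (auxv + auxL x)‖ * 1 :=
          mul_le_mul_of_nonneg_left hprod (norm_nonneg _)
      _ = _ := mul_one _
  rw [hfun]
  have hbd' := hbd (auxv + auxL x) (hzx x)
  rw [auxv_norm x] at hbd'
  calc (Real.sqrt (2 + ‖x‖ ^ 2)) ^ k * ‖iteratedFDeriv ℝ k (g ∘ L') x‖
      ≤ (Real.sqrt (2 + ‖x‖ ^ 2)) ^ k
          * ‖iteratedFDeriv ℝ k (‖·‖ : E4 → ℝ) (auxv + auxL x)‖ := by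
        exact mul_le_mul_of_nonneg_left hnormle (by positivity)
    _ ≤ c * Real.sqrt (2 + ‖x‖ ^ 2) := hbd'


theorem aux_H_bound (k : ℕ) :
    ∃ A : ℝ, 0 < A ∧ ∀ x : E3, x ≠ 0 →
      ‖x‖ ^ k * ‖iteratedFDeriv ℝ k (fun ξ : E3 => ‖ξ‖ * Real.sqrt (2 + ‖ξ‖ ^ 2)) x‖
        ≤ A * (‖x‖ * Real.sqrt (2 + ‖x‖ ^ 2)) := by
  classical
  choose cN hcNpos hcN using fun i : ℕ => aux_norm_bound (F := E3) i
  choose cM hcMpos hcM using fun j : ℕ => aux_M_bound j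
  set A : ℝ := (∑ i ∈ Finset.range (k+1), (k.choose i : ℝ) * cN i * cM (k - i)) + 1 with hA
  have hsum_nonneg : 0 ≤ ∑ i ∈ Finset.range (k+1), (k.choose i : ℝ) * cN i * cM (k - i) :=
    Finset.sum_nonneg (fun i _ =>
      mul_nonneg (mul_nonneg (Nat.cast_nonneg _) (hcNpos i).le) (hcMpos (k - i)).le)
  have hApos : 0 < A := by rw [hA]; linarith
  refine ⟨A, hApos, fun x hx => ?_⟩
  have hsapx : x ∈ ({0}ᶜ : Set E3) := hx
  have hso : IsOpen ({0}ᶜ : Set E3) := isOpen_compl_singleton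
  have hfN : ContDiffOn ℝ ⊤ (‖·‖ : E3 → ℝ) ({0}ᶜ : Set E3) :=
    fun y hy => (contDiffAt_norm ℝ hy).contDiffWithinAt
  have hMglobal : ContDiff ℝ ⊤ (fun y : E3 => Real.sqrt (2 + ‖y‖ ^ 2)) := by
    have h1 : ContDiff ℝ ⊤ (fun y : E3 => 2 + ‖y‖ ^ 2) :=
      contDiff_const.add (contDiff_norm_sq ℝ)
    exact contDiff_iff_contDiffAt.mpr
      (fun y => (Real.contDiffAt_sqrt (by positivity)).comp y h1.contDiffAt)
  have hleib := norm_iteratedFDerivWithin_mul_le (𝕜 := ℝ)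
    (f := (‖·‖ : E3 → ℝ)) (g := fun y : E3 => Real.sqrt (2 + ‖y‖ ^ 2))
    hfN hMglobal.contDiffOn hso.uniqueDiffOn hsapx (n := k) le_top
  set r : ℝ := ‖x‖ with hr
  set t : ℝ := Real.sqrt (2 + ‖x‖ ^ 2) with ht
  have hrpos : 0 < r := norm_pos_iff.mpr hx
  have htpos : 0 < t := Real.sqrt_pos.mpr (by positivity)
  have hrt : r ≤ t := by
    rw [hr, ht]
    rw [show ‖x‖ = Real.sqrt (‖x‖ ^ 2) from (Real.sqrt_sq (norm_nonneg x)).symm]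
    exact Real.sqrt_le_sqrt (by nlinarith [Real.sq_sqrt (sq_nonneg ‖x‖)])
  calc r ^ k * ‖iteratedFDeriv ℝ k (fun ξ : E3 => ‖ξ‖ * Real.sqrt (2 + ‖ξ‖ ^ 2)) x‖
      = r ^ k * ‖iteratedFDerivWithin ℝ k
          (fun ξ : E3 => ‖ξ‖ * Real.sqrt (2 + ‖ξ‖ ^ 2)) ({0}ᶜ : Set E3) x‖ := by
        rw [iteratedFDerivWithin_of_isOpen k hso hsapx]
    _ ≤ r ^ k * ∑ i ∈ Finset.range (k+1), (k.choose i : ℝ)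
          * ‖iteratedFDerivWithin ℝ i (‖·‖ : E3 → ℝ) ({0}ᶜ : Set E3) x‖
          * ‖iteratedFDerivWithin ℝ (k - i)
              (fun y : E3 => Real.sqrt (2 + ‖y‖ ^ 2)) ({0}ᶜ : Set E3) x‖ :=
        mul_le_mul_of_nonneg_left hleib (by positivity)
    _ = ∑ i ∈ Finset.range (k+1), r ^ k * ((k.choose i : ℝ)
          * ‖iteratedFDerivWithin ℝ i (‖·‖ : E3 → ℝ) ({0}ᶜ : Set E3) x‖
          * ‖iteratedFDerivWithin ℝ (k - i)
              (fun y : E3 => Real.sqrt (2 + ‖y‖ ^ 2)) ({0}ᶜ : Set E3) x‖) :=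
        Finset.mul_sum _ _ _
    _ ≤ ∑ i ∈ Finset.range (k+1), ((k.choose i : ℝ) * cN i * cM (k - i)) * (r * t) := by
        refine Finset.sum_le_sum (fun i hi => ?_)
        have hik : i ≤ k := Nat.lt_succ_iff.mp (Finset.mem_range.mp hi)
        rw [iteratedFDerivWithin_of_isOpen i hso hsapx,
          iteratedFDerivWithin_of_isOpen (k - i) hso hsapx]
        set a : ℝ := ‖iteratedFDeriv ℝ i (‖·‖ : E3 → ℝ) x‖ with ha
        set b : ℝ := ‖iteratedFDeriv ℝ (k - i)
          (fun y : E3 => Real.sqrt (2 + ‖y‖ ^ 2)) x‖ with hb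
        have hNx : r ^ i * a ≤ cN i * r := hcN i x hx
        have hMx : t ^ (k - i) * b ≤ cM (k - i) * t := hcM (k - i) x
        have hbx : r ^ (k - i) * b ≤ cM (k - i) * t := by
          refine le_trans ?_ hMx
          exact mul_le_mul_of_nonneg_right
            (pow_le_pow_left₀ hrpos.le hrt _) (norm_nonneg _)
        have hsplit : r ^ k = r ^ i * r ^ (k - i) := by
          rw [← pow_add]
          congr 1
          omega
        have hmm : (r ^ i * a) * (r ^ (k - i) * b) ≤ (cN i * r) * (cM (k - i) * t) :=
          mul_le_mul hNx hbx (mul_nonneg (by positivity) (norm_nonneg _))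
            (mul_nonneg (hcNpos i).le hrpos.le)
        calc r ^ k * ((k.choose i : ℝ) * a * b)
            = (k.choose i : ℝ) * ((r ^ i * a) * (r ^ (k - i) * b)) := by
              rw [hsplit]; ring
          _ ≤ (k.choose i : ℝ) * ((cN i * r) * (cM (k - i) * t)) :=
              mul_le_mul_of_nonneg_left hmm (Nat.cast_nonneg _)
          _ = ((k.choose i : ℝ) * cN i * cM (k - i)) * (r * t) := by ring
    _ = (∑ i ∈ Finset.range (k+1), (k.choose i : ℝ) * cN i * cM (k - i)) * (r * t) :=
        (Finset.sum_mul _ _ _).symm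
    _ ≤ A * (r * t) := by
        refine mul_le_mul_of_nonneg_right ?_ (by positivity)
        rw [hA]; linarith


theorem aux_M_smooth : ContDiff ℝ ⊤ (fun y : E3 => Real.sqrt (2 + ‖y‖ ^ 2)) := by
  have h1 : ContDiff ℝ ⊤ (fun y : E3 => 2 + ‖y‖ ^ 2) :=
    contDiff_const.add (contDiff_norm_sq ℝ)
  exact contDiff_iff_contDiffAt.mpr
    (fun y => (Real.contDiffAt_sqrt (by positivity)).comp y h1.contDiffAt)

theorem aux_fderiv_iso (f : E3 → ℝ) (k : ℕ) (y : E3) :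
    ‖fderiv ℝ (iteratedFDeriv ℝ k f) y‖ = ‖iteratedFDeriv ℝ (k + 1) f y‖ := by
  rw [iteratedFDeriv_succ_eq_comp_left]
  simp only [Function.comp_apply]
  rw [LinearIsometryEquiv.norm_map]

theorem aux_sqrt_mono {u v : ℝ} (hu : 0 ≤ u) (huv : u ≤ v) :
    Real.sqrt (2 + u ^ 2) ≤ Real.sqrt (2 + v ^ 2) :=
  Real.sqrt_le_sqrt (by nlinarith)

theorem aux_sqrt_double (s : ℝ) :
    Real.sqrt (2 + (2 * s) ^ 2) ≤ 2 * Real.sqrt (2 + s ^ 2) := by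
  have h1 : Real.sqrt (2 + (2 * s) ^ 2) ≤ Real.sqrt (4 * (2 + s ^ 2)) :=
    Real.sqrt_le_sqrt (by nlinarith)
  have h2 : Real.sqrt (4 * (2 + s ^ 2)) = 2 * Real.sqrt (2 + s ^ 2) := by
    rw [show (4 : ℝ) = 2 ^ 2 by norm_num, Real.sqrt_mul (by positivity),
      Real.sqrt_sq (by norm_num : (0:ℝ) ≤ 2)]
  linarith

theorem aux_diff (k : ℕ) (hk1 : 1 ≤ k) (hk4 : k ≤ 4) (A : ℝ) (hA : 0 < A)
    (hbk : ∀ x : E3, x ≠ 0 →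
      ‖x‖ ^ k * ‖iteratedFDeriv ℝ k (fun ξ : E3 => ‖ξ‖ * Real.sqrt (2 + ‖ξ‖ ^ 2)) x‖
        ≤ A * (‖x‖ * Real.sqrt (2 + ‖x‖ ^ 2)))
    (hbk1 : ∀ x : E3, x ≠ 0 →
      ‖x‖ ^ (k + 1) * ‖iteratedFDeriv ℝ (k + 1) (fun ξ : E3 => ‖ξ‖ * Real.sqrt (2 + ‖ξ‖ ^ 2)) x‖
        ≤ A * (‖x‖ * Real.sqrt (2 + ‖x‖ ^ 2)))
    (a b : E3) (ha : a ≠ 0) (hb : b ≠ 0) (hab : ‖a‖ ≤ ‖b‖) :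
    ‖iteratedFDeriv ℝ k (fun ξ : E3 => ‖ξ‖ * Real.sqrt (2 + ‖ξ‖ ^ 2)) b
        - iteratedFDeriv ℝ k (fun ξ : E3 => ‖ξ‖ * Real.sqrt (2 + ‖ξ‖ ^ 2)) a‖
      ≤ (32 * A) * (Real.sqrt (2 + ‖a‖ ^ 2) / ‖a‖ ^ k + Real.sqrt (2 + ‖b‖ ^ 2) / ‖b‖ ^ k)
          * ‖b - a‖ := by
  set Hf : E3 → ℝ := fun ξ : E3 => ‖ξ‖ * Real.sqrt (2 + ‖ξ‖ ^ 2) with hHf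
  set ta : ℝ := Real.sqrt (2 + ‖a‖ ^ 2) with hta
  set tb : ℝ := Real.sqrt (2 + ‖b‖ ^ 2) with htb
  set pa : ℝ := ta / ‖a‖ ^ k with hpa
  set pb : ℝ := tb / ‖b‖ ^ k with hpb
  set d : ℝ := ‖b - a‖ with hd
  have hra : (0:ℝ) < ‖a‖ := norm_pos_iff.mpr ha
  have hrb : (0:ℝ) < ‖b‖ := norm_pos_iff.mpr hb
  have htapos : 0 < ta := Real.sqrt_pos.mpr (by positivity)
  have htbpos : 0 < tb := Real.sqrt_pos.mpr (by positivity)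
  have hpapos : 0 < pa := div_pos htapos (pow_pos hra k)
  have hpbpos : 0 < pb := div_pos htbpos (pow_pos hrb k)
  have hdnn : 0 ≤ d := norm_nonneg _
  by_cases hcase : ‖b‖ ≤ 2 * d
  · -- far case
    have hDa : ‖iteratedFDeriv ℝ k Hf a‖ ≤ A * ‖a‖ * pa := by
      have h0 := hbk a ha
      rw [hpa, mul_div_assoc'] at *
      rw [le_div_iff₀ (pow_pos hra k)]
      calc ‖iteratedFDeriv ℝ k Hf a‖ * ‖a‖ ^ k
          = ‖a‖ ^ k * ‖iteratedFDeriv ℝ k Hf a‖ := mul_comm _ _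
        _ ≤ A * (‖a‖ * ta) := h0
        _ = A * ‖a‖ * ta := by ring
    have hDb : ‖iteratedFDeriv ℝ k Hf b‖ ≤ A * ‖b‖ * pb := by
      have h0 := hbk b hb
      rw [hpb, mul_div_assoc']
      rw [le_div_iff₀ (pow_pos hrb k)]
      calc ‖iteratedFDeriv ℝ k Hf b‖ * ‖b‖ ^ k
          = ‖b‖ ^ k * ‖iteratedFDeriv ℝ k Hf b‖ := mul_comm _ _
        _ ≤ A * (‖b‖ * tb) := h0
        _ = A * ‖b‖ * tb := by ring
    calc ‖iteratedFDeriv ℝ k Hf b - iteratedFDeriv ℝ k Hf a‖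
        ≤ ‖iteratedFDeriv ℝ k Hf b‖ + ‖iteratedFDeriv ℝ k Hf a‖ := norm_sub_le _ _
      _ ≤ A * ‖b‖ * pb + A * ‖a‖ * pa := add_le_add hDb hDa
      _ ≤ A * ‖b‖ * pb + A * ‖b‖ * pa := by
          have : A * ‖a‖ * pa ≤ A * ‖b‖ * pa :=
            mul_le_mul_of_nonneg_right
              (mul_le_mul_of_nonneg_left hab hA.le) hpapos.le
          linarith
      _ = (A * ‖b‖) * (pa + pb) := by ring
      _ ≤ (A * (2 * d)) * (pa + pb) := by
          exact mul_le_mul_of_nonneg_right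
            (mul_le_mul_of_nonneg_left hcase hA.le) (by positivity)
      _ = (2 * A) * ((pa + pb) * d) := by ring
      _ ≤ (32 * A) * ((pa + pb) * d) := by
          refine mul_le_mul_of_nonneg_right (by linarith) ?_
          positivity
      _ = (32 * A) * (pa + pb) * d := by ring
  · -- near case, mean value inequality on a ball
    push_neg at hcase
    set s : Set E3 := Metric.ball b (‖b‖ / 2) with hsdef
    have hbmem : b ∈ s := Metric.mem_ball_self (by positivity)
    have hamem : a ∈ s := by
      rw [hsdef, Metric.mem_ball, dist_eq_norm, ← norm_sub_rev]
      calc ‖b - a‖ < ‖b‖ / 2 := by rw [← hd]; linarith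
        _ ≤ ‖b‖ / 2 := le_refl _
    have hyfacts : ∀ y ∈ s, y ≠ 0 ∧ ‖b‖ ≤ 2 * ‖y‖ ∧
        Real.sqrt (2 + ‖y‖ ^ 2) ≤ 2 * tb := by
      intro y hy
      rw [hsdef, Metric.mem_ball, dist_eq_norm] at hy
      have h1 : ‖b‖ ≤ ‖y‖ + ‖y - b‖ := by
        calc ‖b‖ = ‖y - (y - b)‖ := by congr 1; abel
          _ ≤ ‖y‖ + ‖y - b‖ := norm_sub_le _ _
      have h2 : ‖b‖ / 2 < ‖y‖ := by linarith
      have h3 : ‖y‖ ≤ 2 * ‖b‖ := by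
        calc ‖y‖ ≤ ‖b‖ + ‖y - b‖ := by
              calc ‖y‖ = ‖b + (y - b)‖ := by congr 1; abel
                _ ≤ ‖b‖ + ‖y - b‖ := norm_add_le _ _
          _ ≤ 2 * ‖b‖ := by linarith
      refine ⟨fun h => by (rw [h] at h2; simp at h2; linarith), by linarith, ?_⟩
      calc Real.sqrt (2 + ‖y‖ ^ 2) ≤ Real.sqrt (2 + (2 * ‖b‖) ^ 2) :=
            aux_sqrt_mono (norm_nonneg _) h3
        _ ≤ 2 * tb := aux_sqrt_double ‖b‖
    have hdiff : ∀ y ∈ s, DifferentiableAt ℝ (iteratedFDeriv ℝ k Hf) y := by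
      intro y hy
      obtain ⟨hy0, -, -⟩ := hyfacts y hy
      have hHy : ContDiffAt ℝ ⊤ Hf y :=
        (contDiffAt_norm ℝ hy0).mul aux_M_smooth.contDiffAt
      have h2 : ContDiffAt ℝ 1 (iteratedFDeriv ℝ k Hf) y :=
        hHy.iteratedFDeriv_right (by exact_mod_cast le_top)
      exact h2.differentiableAt (by norm_num)
    have hbound : ∀ y ∈ s, ‖fderiv ℝ (iteratedFDeriv ℝ k Hf) y‖
        ≤ (32 * A) * (pa + pb) := by
      intro y hy
      obtain ⟨hy0, hby, hty⟩ := hyfacts y hy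
      have hry : (0:ℝ) < ‖y‖ := norm_pos_iff.mpr hy0
      rw [aux_fderiv_iso]
      set q : ℝ := ‖iteratedFDeriv ℝ (k + 1) Hf y‖ with hq
      set ty : ℝ := Real.sqrt (2 + ‖y‖ ^ 2) with hty2
      have h0 := hbk1 y hy0
      rw [pow_succ] at h0
      have h1 : ‖y‖ * (‖y‖ ^ k * q) ≤ ‖y‖ * (A * ty) := by
        have e1 : ‖y‖ * (‖y‖ ^ k * q) = ‖y‖ ^ k * ‖y‖ * q := by ring
        have e2 : ‖y‖ * (A * ty) = A * (‖y‖ * ty) := by ring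
        rw [e1, e2]
        exact h0
      have hyq : ‖y‖ ^ k * q ≤ A * ty := le_of_mul_le_mul_left h1 hry
      have hqb : q * ‖b‖ ^ k ≤ 2 ^ (k + 1) * A * tb := by
        calc q * ‖b‖ ^ k ≤ q * (2 * ‖y‖) ^ k := by
              refine mul_le_mul_of_nonneg_left ?_ (norm_nonneg _)
              exact pow_le_pow_left₀ hrb.le hby k
          _ = 2 ^ k * (‖y‖ ^ k * q) := by rw [mul_pow]; ring
          _ ≤ 2 ^ k * (A * ty) := by
              exact mul_le_mul_of_nonneg_left hyq (by positivity)
          _ ≤ 2 ^ k * (A * (2 * tb)) := by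
              refine mul_le_mul_of_nonneg_left ?_ (by positivity)
              exact mul_le_mul_of_nonneg_left hty hA.le
          _ = 2 ^ (k + 1) * A * tb := by rw [pow_succ]; ring
      have hq1 : q ≤ 2 ^ (k + 1) * A * tb / ‖b‖ ^ k :=
        (le_div_iff₀ (pow_pos hrb k)).mpr hqb
      have h32 : (2:ℝ) ^ (k + 1) ≤ 32 := by
        calc (2:ℝ) ^ (k + 1) ≤ 2 ^ 5 := by
              exact pow_le_pow_right₀ (by norm_num) (by omega)
          _ = 32 := by norm_num
      calc q ≤ 2 ^ (k + 1) * A * tb / ‖b‖ ^ k := hq1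
        _ ≤ 32 * A * tb / ‖b‖ ^ k := by
            gcongr
        _ = 32 * A * pb := by rw [hpb, mul_div_assoc]
        _ ≤ (32 * A) * (pa + pb) := by nlinarith
    have hmvt := Convex.norm_image_sub_le_of_norm_fderiv_le hdiff hbound
      (convex_ball b (‖b‖ / 2)) hamem hbmem
    calc ‖iteratedFDeriv ℝ k Hf b - iteratedFDeriv ℝ k Hf a‖
        ≤ (32 * A) * (pa + pb) * ‖b - a‖ := hmvt
      _ = (32 * A) * (pa + pb) * d := by rw [hd]


/-- For `H(ξ) = ‖ξ‖·√(2 + ‖ξ‖²)` on `ℝ³`, there is `C > 0` such that for `1 ≤ k ≤ 4`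
and nonzero `ξ₁, ξ₂`:
`‖D^k H(ξ₂) - D^k H(-ξ₁)‖ ≤ C·(⟨ξ₁⟩/‖ξ₁‖^k + ⟨ξ₂⟩/‖ξ₂‖^k)·‖ξ₁ + ξ₂‖`. -/
theorem stmt_7 (H : EuclideanSpace ℝ (Fin 3) → ℝ)
    (hH : ∀ ξ : EuclideanSpace ℝ (Fin 3), H ξ = ‖ξ‖ * Real.sqrt (2 + ‖ξ‖ ^ 2)) :
    ∃ C > 0, ∀ k : ℕ, 1 ≤ k → k ≤ 4 →
      ∀ ξ₁ ξ₂ : EuclideanSpace ℝ (Fin 3), ξ₁ ≠ 0 → ξ₂ ≠ 0 →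
      ‖iteratedFDeriv ℝ k H ξ₂ - iteratedFDeriv ℝ k H (-ξ₁)‖ ≤
        C * (Real.sqrt (2 + ‖ξ₁‖ ^ 2) / ‖ξ₁‖ ^ k +
              Real.sqrt (2 + ‖ξ₂‖ ^ 2) / ‖ξ₂‖ ^ k) * ‖ξ₁ + ξ₂‖ := by
  have hHe : H = fun ξ : E3 => ‖ξ‖ * Real.sqrt (2 + ‖ξ‖ ^ 2) := funext hH
  subst hHe
  obtain ⟨A1, hA1pos, hb1⟩ := aux_H_bound 1
  obtain ⟨A2, hA2pos, hb2⟩ := aux_H_bound 2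
  obtain ⟨A3, hA3pos, hb3⟩ := aux_H_bound 3
  obtain ⟨A4, hA4pos, hb4⟩ := aux_H_bound 4
  obtain ⟨A5, hA5pos, hb5⟩ := aux_H_bound 5
  set A : ℝ := max A1 (max A2 (max A3 (max A4 A5))) with hAdef
  have hA1A : A1 ≤ A := le_max_left _ _
  have hA2A : A2 ≤ A := le_trans (le_max_left _ _) (le_max_right _ _)
  have hA3A : A3 ≤ A := le_trans (le_trans (le_max_left _ _) (le_max_right _ _))
    (le_max_right _ _)
  have hA4A : A4 ≤ A := le_trans (le_trans (le_trans (le_max_left _ _)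
    (le_max_right _ _)) (le_max_right _ _)) (le_max_right _ _)
  have hA5A : A5 ≤ A := le_trans (le_trans (le_trans (le_max_right _ _)
    (le_max_right _ _)) (le_max_right _ _)) (le_max_right _ _)
  have hApos : 0 < A := lt_of_lt_of_le hA1pos hA1A
  have hbA : ∀ m : ℕ, 1 ≤ m → m ≤ 5 → ∀ x : E3, x ≠ 0 →
      ‖x‖ ^ m * ‖iteratedFDeriv ℝ m (fun ξ : E3 => ‖ξ‖ * Real.sqrt (2 + ‖ξ‖ ^ 2)) x‖
        ≤ A * (‖x‖ * Real.sqrt (2 + ‖x‖ ^ 2)) := by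
    intro m hm1 hm5 x hx
    have hnn : (0:ℝ) ≤ ‖x‖ * Real.sqrt (2 + ‖x‖ ^ 2) := by positivity
    interval_cases m
    · exact le_trans (hb1 x hx) (mul_le_mul_of_nonneg_right hA1A hnn)
    · exact le_trans (hb2 x hx) (mul_le_mul_of_nonneg_right hA2A hnn)
    · exact le_trans (hb3 x hx) (mul_le_mul_of_nonneg_right hA3A hnn)
    · exact le_trans (hb4 x hx) (mul_le_mul_of_nonneg_right hA4A hnn)
    · exact le_trans (hb5 x hx) (mul_le_mul_of_nonneg_right hA5A hnn)
  refine ⟨32 * A, by positivity, ?_⟩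
  intro k hk1 hk4 ξ₁ ξ₂ h1 h2
  have hbk := hbA k hk1 (by omega)
  have hbk1 := hbA (k + 1) (by omega) (by omega)
  rcases le_total ‖ξ₁‖ ‖ξ₂‖ with hle | hle
  · have h := aux_diff k hk1 hk4 A hApos hbk hbk1 (-ξ₁) ξ₂
      (neg_ne_zero.mpr h1) h2 (by rwa [norm_neg])
    rw [norm_neg, sub_neg_eq_add, show ξ₂ + ξ₁ = ξ₁ + ξ₂ from add_comm _ _] at h
    exact h
  · have h := aux_diff k hk1 hk4 A hApos hbk hbk1 ξ₂ (-ξ₁)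
      h2 (neg_ne_zero.mpr h1) (by rwa [norm_neg])
    rw [norm_neg, norm_sub_rev, show -ξ₁ - ξ₂ = -(ξ₁ + ξ₂) by abel, norm_neg,
      add_comm (Real.sqrt (2 + ‖ξ₂‖ ^ 2) / ‖ξ₂‖ ^ k)] at h
    exact h

end
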